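/- Let m ≥ 1. The space of complex symmetric m×m matrices A with det(A^{(k)}) ≠ 0 for all k = 1, …, m (with the subspace topology from the space of m×m complex matrices) is homotopy equivalent to the m-torus (S¹)^m. -/

import Mathlib

open Matrix

namespace CholTorus

variable {m : ℕ}

/-- leading principal `k × k` submatrix -/
def sub' (A : Matrix (Fin m) (Fin m) ℂ) (k : ℕ) (hk : k ≤ m) : Matrix (Fin k) (Fin k) ℂ :=
  A.submatrix (Fin.castLE hk) (Fin.castLE hk)

lemma sum_restrict {k : ℕ} (hk : k ≤ m) (f : Fin m → ℂ)
    (hf : ∀ l : Fin m, k ≤ l.val → f l = 0) :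
    ∑ l, f l = ∑ l : Fin k, f (Fin.castLE hk l) := by
  classical
  set g : ℕ → ℂ := fun i => if h : i < m then f ⟨i, h⟩ else 0 with hg
  have h1 : ∑ l : Fin m, f l = ∑ i ∈ Finset.range m, g i := by
    rw [Finset.sum_range fun i => g i]
    exact Finset.sum_congr rfl fun l _ => by simp [hg, l.isLt]
  have h2 : ∑ l : Fin k, f (Fin.castLE hk l) = ∑ i ∈ Finset.range k, g i := by
    rw [Finset.sum_range fun i => g i]
    refine Finset.sum_congr rfl fun l _ => ?_
    have hlm : l.val < m := lt_of_lt_of_le l.isLt hk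
    simp only [hg, Fin.coe_castLE, dif_pos hlm]
    rfl
  rw [h1, h2]
  refine (Finset.sum_subset (Finset.range_subset_range.mpr hk) fun i _ hik => ?_).symm
  simp only [Finset.mem_range, not_lt] at hik
  by_cases h : i < m
  · simpa [hg, h] using hf ⟨i, h⟩ hik
  · simp [hg, h]

lemma sub'_castSucc (A : Matrix (Fin m) (Fin m) ℂ) (k : Fin m) :
    (sub' A (k.val + 1) k.isLt).submatrix Fin.castSucc Fin.castSucc
      = sub' A k.val (le_of_lt k.isLt) := by
  ext i j; rfl

lemma det_updateRow_last {n : ℕ} (B : Matrix (Fin (n+1)) (Fin (n+1)) ℂ) :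
    (B.updateRow (Fin.last n) (Pi.single (Fin.last n) 1)).det
      = (B.submatrix Fin.castSucc Fin.castSucc).det := by
  rw [Matrix.det_succ_row _ (Fin.last n)]
  rw [Finset.sum_eq_single (Fin.last n)]
  · simp [Fin.succAbove_last]
    congr 1
    ext i j
    simp [Matrix.updateRow_apply, (Fin.castSucc_lt_last i).ne]
  · intro j _ hj
    simp [Matrix.updateRow_self, Pi.single_eq_of_ne hj]
  · simp

/-- row `k` of the inverse of the leading `(k+1) × (k+1)` block, extended by zero -/
noncomputable def w (A : Matrix (Fin m) (Fin m) ℂ) (k : Fin m) (l : Fin m) : ℂ :=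
  if h : l.val < k.val + 1 then (sub' A (k.val + 1) k.isLt)⁻¹ (Fin.last k.val) ⟨l.val, h⟩ else 0

/-- ratio of consecutive leading principal minors -/
noncomputable def dv (A : Matrix (Fin m) (Fin m) ℂ) (k : Fin m) : ℂ :=
  (sub' A (k.val + 1) k.isLt).det / (sub' A k.val (le_of_lt k.isLt)).det

/-- the lower unitriangular "inverse Cholesky" factor -/
noncomputable def Mm (A : Matrix (Fin m) (Fin m) ℂ) : Matrix (Fin m) (Fin m) ℂ :=
  Matrix.of fun k l => w A k l / w A k k

section Alemmas

variable {A : Matrix (Fin m) (Fin m) ℂ}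
  (hA : ∀ (k : ℕ) (hk : k ≤ m), (sub' A k hk).det ≠ 0)

lemma w_zero {k l : Fin m} (h : k.val < l.val) : w A k l = 0 := dif_neg (by omega)

include hA in
lemma w_mul {k j : Fin m} (hj : j.val ≤ k.val) :
    ∑ l, w A k l * A l j = if j = k then 1 else 0 := by
  have hk1 : k.val + 1 ≤ m := k.isLt
  rw [sum_restrict hk1 _ (fun l hl => by rw [w_zero (by omega), zero_mul])]
  have hjj : j.val < k.val + 1 := by omega
  have hterm : ∀ l : Fin (k.val + 1),
      w A k (Fin.castLE hk1 l) * A (Fin.castLE hk1 l) j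
      = (sub' A (k.val + 1) k.isLt)⁻¹ (Fin.last k.val) l
        * (sub' A (k.val+1) k.isLt) l ⟨j.val, hjj⟩ := by
    intro l
    have : w A k (Fin.castLE hk1 l) = (sub' A (k.val + 1) k.isLt)⁻¹ (Fin.last k.val) l := by
      rw [w, dif_pos (by simpa using l.isLt)]
      congr 1
    rw [this]
    rfl
  rw [Finset.sum_congr rfl fun l _ => hterm l]
  have hinv := Matrix.nonsing_inv_mul (sub' A (k.val+1) k.isLt)
    ((Ne.isUnit (hA (k.val+1) k.isLt)))
  have h2 : ((sub' A (k.val+1) k.isLt)⁻¹ * (sub' A (k.val+1) k.isLt))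
        (Fin.last k.val) ⟨j.val, hjj⟩
      = (1 : Matrix (Fin (k.val+1)) (Fin (k.val+1)) ℂ) (Fin.last k.val) ⟨j.val, hjj⟩ := by
    rw [hinv]
  rw [Matrix.mul_apply] at h2
  rw [h2, Matrix.one_apply]
  congr 1
  simp only [eq_iff_iff]
  constructor
  · intro h; rw [Fin.ext_iff] at h ⊢; simpa [Fin.last] using h.symm
  · intro h; rw [Fin.ext_iff] at h ⊢; simpa [Fin.last] using h.symm

lemma w_diag_eq (k : Fin m) :
    w A k k = (sub' A k.val (le_of_lt k.isLt)).det / (sub' A (k.val + 1) k.isLt).det := by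
  rw [w, dif_pos (by omega)]
  have hk : (⟨k.val, by omega⟩ : Fin (k.val+1)) = Fin.last k.val := by
    rw [Fin.ext_iff]; rfl
  rw [hk, Matrix.inv_def, Matrix.smul_apply, Matrix.adjugate_apply, det_updateRow_last,
    sub'_castSucc, Ring.inverse_eq_inv', smul_eq_mul, mul_comm, div_eq_mul_inv]

include hA in
lemma dv_ne (k : Fin m) : dv A k ≠ 0 :=
  div_ne_zero (hA _ _) (hA _ _)

include hA in
lemma w_diag_ne (k : Fin m) : w A k k ≠ 0 := by
  rw [w_diag_eq]; exact div_ne_zero (hA _ _) (hA _ _)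

include hA in
lemma w_diag_inv (k : Fin m) : (w A k k)⁻¹ = dv A k := by
  rw [w_diag_eq, dv, inv_div]

lemma Mm_lower {k l : Fin m} (h : k.val < l.val) : Mm A k l = 0 := by
  simp [Mm, w_zero h]

include hA in
lemma Mm_diag (k : Fin m) : Mm A k k = 1 := by
  simp [Mm, div_self (w_diag_ne hA k)]

include hA in
lemma MA_apply {k j : Fin m} (hj : j.val ≤ k.val) :
    (Mm A * A) k j = if j = k then dv A k else 0 := by
  rw [Matrix.mul_apply]
  have : ∀ l, Mm A k l * A l j = w A k l * A l j / w A k k := fun l => by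
    simp [Mm, div_mul_eq_mul_div]
  rw [Finset.sum_congr rfl fun l _ => this l, ← Finset.sum_div, w_mul hA hj]
  split
  · rw [one_div, w_diag_inv hA]
  · rw [zero_div]

include hA in
lemma key (hsym : Aᵀ = A) : Mm A * A * (Mm A)ᵀ = diagonal (dv A) := by
  have hlow : ∀ i j : Fin m, j.val < i.val → (Mm A * A * (Mm A)ᵀ) i j = 0 := by
    intro i j hij
    rw [Matrix.mul_apply]
    refine Finset.sum_eq_zero fun l _ => ?_
    rcases le_or_gt l.val j.val with h | h
    · have : (Mm A * A) i l = 0 := by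
        rw [MA_apply hA (by omega), if_neg (by intro he; rw [he] at h; omega)]
      rw [this, zero_mul]
    · rw [Matrix.transpose_apply, Mm_lower h, mul_zero]
  have hdiag : ∀ i : Fin m, (Mm A * A * (Mm A)ᵀ) i i = dv A i := by
    intro i
    rw [Matrix.mul_apply]
    rw [Finset.sum_eq_single i]
    · rw [Matrix.transpose_apply, MA_apply hA (le_refl _), if_pos rfl, Mm_diag hA, mul_one]
    · intro l _ hl
      rcases lt_or_gt_of_ne (fun he : l.val = i.val => hl (Fin.ext he)) with h | h
      · rw [MA_apply hA (le_of_lt h), if_neg (fun he => hl he), zero_mul]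
      · rw [Matrix.transpose_apply, Mm_lower h, mul_zero]
    · intro hi; exact absurd (Finset.mem_univ i) hi
  have hS : (Mm A * A * (Mm A)ᵀ)ᵀ = Mm A * A * (Mm A)ᵀ := by
    rw [Matrix.transpose_mul, Matrix.transpose_mul, Matrix.transpose_transpose, hsym,
      Matrix.mul_assoc]
  ext i j
  rcases lt_trichotomy i.val j.val with h | h | h
  · have := congrFun (congrFun hS j) i
    rw [Matrix.transpose_apply] at this
    rw [Matrix.diagonal_apply_ne _ (fun he => by rw [he] at h; omega), this, hlow j i h]
  · have : i = j := Fin.ext h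
    subst this
    rw [Matrix.diagonal_apply_eq, hdiag]
  · rw [Matrix.diagonal_apply_ne _ (fun he => by rw [he] at h; omega), hlow i j h]

end Alemmas

section trunc

lemma sub'_mul_lower {N B : Matrix (Fin m) (Fin m) ℂ}
    (hN : ∀ i l : Fin m, i.val < l.val → N i l = 0) (k : ℕ) (hk : k ≤ m) :
    sub' (N * B) k hk = sub' N k hk * sub' B k hk := by
  ext i j
  show (N * B) (Fin.castLE hk i) (Fin.castLE hk j) = _
  rw [Matrix.mul_apply, Matrix.mul_apply]
  rw [sum_restrict hk (fun l => N (Fin.castLE hk i) l * B l (Fin.castLE hk j))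
    (fun l hl => by show N (Fin.castLE hk i) l * B l (Fin.castLE hk j) = 0
                    rw [hN _ _ (by simpa using lt_of_lt_of_le i.isLt hl), zero_mul])]
  rfl

lemma sub'_mul_upper {B U : Matrix (Fin m) (Fin m) ℂ}
    (hU : ∀ l j : Fin m, j.val < l.val → U l j = 0) (k : ℕ) (hk : k ≤ m) :
    sub' (B * U) k hk = sub' B k hk * sub' U k hk := by
  ext i j
  show (B * U) (Fin.castLE hk i) (Fin.castLE hk j) = _
  rw [Matrix.mul_apply, Matrix.mul_apply]
  rw [sum_restrict hk (fun l => B (Fin.castLE hk i) l * U l (Fin.castLE hk j))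
    (fun l hl => by show B (Fin.castLE hk i) l * U l (Fin.castLE hk j) = 0
                    rw [hU _ _ (by simpa using lt_of_lt_of_le j.isLt hl), mul_zero])]
  rfl

lemma sub'_diagonal (v : Fin m → ℂ) (k : ℕ) (hk : k ≤ m) :
    sub' (diagonal v) k hk = diagonal (fun i : Fin k => v (Fin.castLE hk i)) :=
  Matrix.submatrix_diagonal v (Fin.castLE hk) (Fin.castLE_injective hk)

end trunc

end CholTorus
-- appended to full.lean namespace CholTorus
namespace CholTorus

variable {m : ℕ}

/-- interpolation between `Mm A` (at `t = 0`) and `1` (at `t = 1`) -/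
noncomputable def Mt (t : ℝ) (A : Matrix (Fin m) (Fin m) ℂ) : Matrix (Fin m) (Fin m) ℂ :=
  ((1 - t : ℝ) : ℂ) • Mm A + ((t : ℝ) : ℂ) • (1 : Matrix (Fin m) (Fin m) ℂ)

lemma Mt_lower (t : ℝ) (A : Matrix (Fin m) (Fin m) ℂ) {k l : Fin m} (h : k.val < l.val) :
    Mt t A k l = 0 := by
  have hne : k ≠ l := fun he => by rw [he] at h; omega
  simp [Mt, Mm_lower h, Matrix.one_apply_ne hne]

section Mtlem

variable {A : Matrix (Fin m) (Fin m) ℂ}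
  (hA : ∀ (k : ℕ) (hk : k ≤ m), (sub' A k hk).det ≠ 0)

include hA in
lemma Mt_diagval (t : ℝ) (k : Fin m) : Mt t A k k = 1 := by
  simp [Mt, Mm_diag hA, Matrix.one_apply_eq]

include hA in
lemma Mt_det (t : ℝ) : (Mt t A).det = 1 := by
  rw [Matrix.det_of_lowerTriangular (Mt t A)
    (fun i j h => Mt_lower t A (show i.val < j.val from h))]
  simp [Mt_diagval hA]

include hA in
lemma Mt_isUnit (t : ℝ) : IsUnit (Mt t A).det := by
  rw [Mt_det hA]; exact isUnit_one

lemma Mt_zero : Mt 0 A = Mm A := by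
  simp [Mt]

lemma Mt_one : Mt 1 A = 1 := by
  simp [Mt]

end Mtlem

/-- the interpolated diagonal scaling factor -/
noncomputable def sc (t : ℝ) (z : ℂ) : ℂ := ((1 - t + t * (‖z‖)⁻¹ : ℝ) : ℂ)

lemma sc_ne {t : ℝ} (ht0 : 0 ≤ t) (ht1 : t ≤ 1) {z : ℂ} (hz : z ≠ 0) : sc t z ≠ 0 := by
  rw [sc, Ne, Complex.ofReal_eq_zero]
  have habs : 0 < ‖z‖ := norm_pos_iff.mpr hz
  rcases eq_or_lt_of_le ht0 with h | h
  · rw [← h]; norm_num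
  · have : 0 < t * (‖z‖)⁻¹ := by positivity
    nlinarith

lemma sc_zero (z : ℂ) : sc 0 z = 1 := by simp [sc]

lemma sc_one {z : ℂ} : sc 1 z = ((‖z‖)⁻¹ : ℝ) := by simp [sc]

noncomputable def dd (t : ℝ) (A : Matrix (Fin m) (Fin m) ℂ) (k : Fin m) : ℂ :=
  dv A k * sc t (dv A k)

/-- the homotopy, on the matrix level -/
noncomputable def Hmat (t : ℝ) (A : Matrix (Fin m) (Fin m) ℂ) : Matrix (Fin m) (Fin m) ℂ :=
  (Mt t A)⁻¹ * diagonal (dd t A) * ((Mt t A)⁻¹)ᵀ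

section Hlem

variable {A : Matrix (Fin m) (Fin m) ℂ} {t : ℝ}
  (hA : ∀ (k : ℕ) (hk : k ≤ m), (sub' A k hk).det ≠ 0)
  (ht0 : 0 ≤ t) (ht1 : t ≤ 1)

include hA ht0 ht1 in
lemma dd_ne (k : Fin m) : dd t A k ≠ 0 :=
  mul_ne_zero (dv_ne hA k) (sc_ne ht0 ht1 (dv_ne hA k))

include hA in
lemma Hmat_conj : Mt t A * Hmat t A * (Mt t A)ᵀ = diagonal (dd t A) := by
  rw [Hmat, Matrix.transpose_nonsing_inv]
  calc Mt t A * ((Mt t A)⁻¹ * diagonal (dd t A) * ((Mt t A)ᵀ)⁻¹) * (Mt t A)ᵀ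
      = (Mt t A * (Mt t A)⁻¹) * diagonal (dd t A) * (((Mt t A)ᵀ)⁻¹ * (Mt t A)ᵀ) := by
        simp only [Matrix.mul_assoc]
    _ = diagonal (dd t A) := by
        rw [Matrix.mul_nonsing_inv _ (Mt_isUnit hA t),
          Matrix.nonsing_inv_mul _ (by rw [Matrix.det_transpose, Mt_det hA]; exact isUnit_one)]
        simp

lemma Hmat_symm (hsym : Aᵀ = A) : (Hmat t A)ᵀ = Hmat t A := by
  rw [Hmat, Matrix.transpose_mul, Matrix.transpose_mul, Matrix.transpose_transpose,
    Matrix.diagonal_transpose, Matrix.mul_assoc]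

include hA ht0 ht1 in
lemma Hmat_minor_ne (k : ℕ) (hk : k ≤ m) : (sub' (Hmat t A) k hk).det ≠ 0 := by
  have e1 : sub' (Mt t A * (Hmat t A * (Mt t A)ᵀ)) k hk
      = sub' (Mt t A) k hk * (sub' (Hmat t A) k hk * sub' ((Mt t A)ᵀ) k hk) := by
    rw [sub'_mul_lower (fun i l h => Mt_lower t A h) k hk,
      sub'_mul_upper (fun l j h => by rw [Matrix.transpose_apply]; exact Mt_lower t A h) k hk]
  have e2 : Mt t A * (Hmat t A * (Mt t A)ᵀ) = diagonal (dd t A) := by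
    rw [← Matrix.mul_assoc]; exact Hmat_conj hA
  rw [e2] at e1
  have e3 : (sub' (diagonal (dd t A)) k hk).det ≠ 0 := by
    rw [sub'_diagonal, Matrix.det_diagonal]
    exact Finset.prod_ne_zero_iff.mpr fun i _ => dd_ne hA ht0 ht1 _
  rw [e1] at e3
  intro h0
  rw [Matrix.det_mul, Matrix.det_mul, h0] at e3
  simp at e3

include hA in
lemma Hmat_zero (hsym : Aᵀ = A) : Hmat 0 A = A := by
  have hdd : dd 0 A = dv A := funext fun k => by rw [dd, sc_zero, mul_one]
  have hM : diagonal (dd 0 A) = Mm A * A * (Mm A)ᵀ := by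
    rw [hdd]; exact (key hA hsym).symm
  rw [Hmat, Mt_zero, hM, Matrix.transpose_nonsing_inv]
  have hu : IsUnit (Mm A).det := by
    have := Mt_isUnit hA (A := A) 0
    rwa [Mt_zero] at this
  have hut : IsUnit (Mm A)ᵀ.det := by rwa [Matrix.det_transpose]
  calc (Mm A)⁻¹ * (Mm A * A * (Mm A)ᵀ) * ((Mm A)ᵀ)⁻¹
      = ((Mm A)⁻¹ * Mm A) * A * ((Mm A)ᵀ * ((Mm A)ᵀ)⁻¹) := by simp only [Matrix.mul_assoc]
    _ = A := by rw [Matrix.nonsing_inv_mul _ hu, Matrix.mul_nonsing_inv _ hut]; simp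

lemma Hmat_one : Hmat 1 A = diagonal (fun k => dv A k * ((‖dv A k‖)⁻¹ : ℝ)) := by
  rw [Hmat, Mt_one, inv_one, Matrix.transpose_one, Matrix.one_mul, Matrix.mul_one]
  refine congrArg diagonal (funext fun k => ?_)
  rw [dd, sc_one]

end Hlem

end CholTorus
namespace CholTorus

variable {m : ℕ}

/-- the space of symmetric matrices with nonvanishing leading principal minors -/
def Xs (m : ℕ) :=
  {A : Matrix (Fin m) (Fin m) ℂ // Aᵀ = A ∧ ∀ k : ℕ, 1 ≤ k → ∀ hk : k ≤ m,
    (A.submatrix (Fin.castLE hk) (Fin.castLE hk)).det ≠ 0}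

noncomputable instance : TopologicalSpace (Xs m) := instTopologicalSpaceSubtype

lemma mem_minors {A : Matrix (Fin m) (Fin m) ℂ}
    (h : ∀ k : ℕ, 1 ≤ k → ∀ hk : k ≤ m,
      (A.submatrix (Fin.castLE hk) (Fin.castLE hk)).det ≠ 0) :
    ∀ (k : ℕ) (hk : k ≤ m), (sub' A k hk).det ≠ 0 := by
  intro k hk
  match k with
  | 0 => rw [Matrix.det_fin_zero]; exact one_ne_zero
  | (n+1) => exact h (n+1) (by omega) hk

lemma c_sub' (k : ℕ) (hk : k ≤ m) : Continuous fun p : Xs m => sub' p.val k hk :=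
  continuous_subtype_val.matrix_submatrix _ _

lemma c_inv_sub (k : Fin m) :
    Continuous fun p : Xs m => (sub' p.val (k.val + 1) k.isLt)⁻¹ := by
  have he : (fun p : Xs m => (sub' p.val (k.val + 1) k.isLt)⁻¹)
      = fun p : Xs m => ((sub' p.val (k.val + 1) k.isLt).det)⁻¹
          • (sub' p.val (k.val + 1) k.isLt).adjugate :=
    funext fun p => by rw [Matrix.inv_def, Ring.inverse_eq_inv']
  rw [he]
  exact (((c_sub' _ _).matrix_det).inv₀
    fun p => mem_minors p.2.2 _ _).smul ((c_sub' _ _).matrix_adjugate)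

lemma c_w (k l : Fin m) : Continuous fun p : Xs m => w p.val k l := by
  by_cases h : l.val < k.val + 1
  · simp only [w, dif_pos h]
    exact (c_inv_sub k).matrix_elem _ _
  · simp only [w, dif_neg h]
    exact continuous_const

lemma c_Mm : Continuous fun p : Xs m => Mm p.val := by
  apply continuous_matrix
  intro k l
  exact (c_w k l).div₀ (c_w k k) fun p => w_diag_ne (mem_minors p.2.2) k

lemma c_dv (k : Fin m) : Continuous fun p : Xs m => dv p.val k :=
  ((c_sub' _ _).matrix_det).div₀ ((c_sub' _ _).matrix_det)
    fun p => mem_minors p.2.2 _ _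

lemma sphere_ne (u : Metric.sphere (0 : ℂ) 1) : (u : ℂ) ≠ 0 := by
  have hu := mem_sphere_zero_iff_norm.mp u.2
  intro h
  rw [h] at hu
  simp at hu

/-- the map to the torus -/
noncomputable def fm (p : Xs m) (k : Fin m) : Metric.sphere (0 : ℂ) 1 :=
  ⟨dv p.val k * ((‖dv p.val k‖)⁻¹ : ℝ), by
    rw [mem_sphere_zero_iff_norm]
    have h : dv p.val k ≠ 0 := dv_ne (mem_minors p.2.2) k
    have habs : ‖dv p.val k‖ ≠ 0 := norm_ne_zero_iff.mpr h
    rw [norm_mul, Complex.norm_real, Real.norm_eq_abs,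
      abs_of_nonneg (inv_nonneg.mpr (norm_nonneg _)), mul_inv_cancel₀ habs]⟩

noncomputable def fC : C(Xs m, Fin m → Metric.sphere (0 : ℂ) 1) :=
  ⟨fm, by
    apply continuous_pi
    intro k
    apply Continuous.subtype_mk
    exact (c_dv k).mul (Complex.continuous_ofReal.comp
      ((continuous_norm.comp (c_dv k)).inv₀
        fun p => norm_ne_zero_iff.mpr (dv_ne (mem_minors p.2.2) k)))⟩

/-- the map from the torus -/
noncomputable def gm (z : Fin m → Metric.sphere (0 : ℂ) 1) : Xs m :=
  ⟨diagonal (fun k => (z k : ℂ)), Matrix.diagonal_transpose _, by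
    intro k h1 hk
    show (sub' (diagonal fun k => (z k : ℂ)) k hk).det ≠ 0
    rw [sub'_diagonal, Matrix.det_diagonal]
    exact Finset.prod_ne_zero_iff.mpr fun i _ => sphere_ne _⟩

noncomputable def gC : C(Fin m → Metric.sphere (0 : ℂ) 1, Xs m) :=
  ⟨gm, Continuous.subtype_mk
    (Continuous.matrix_diagonal
      (continuous_pi fun k => continuous_subtype_val.comp (continuous_apply k))) _⟩

lemma dv_diag (v : Fin m → ℂ) (hv : ∀ i, v i ≠ 0) (k : Fin m) :
    dv (diagonal v) k = v k := by
  rw [dv, sub'_diagonal, sub'_diagonal, Matrix.det_diagonal, Matrix.det_diagonal,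
    Fin.prod_univ_castSucc]
  have h1 : ∀ i : Fin k.val,
      v (Fin.castLE k.isLt i.castSucc) = v (Fin.castLE (le_of_lt k.isLt) i) := fun i => by
    congr 1
  have h2 : v (Fin.castLE k.isLt (Fin.last k.val)) = v k := by
    congr 1
  rw [Finset.prod_congr rfl fun i _ => h1 i, h2, mul_comm, mul_div_assoc,
    div_self (Finset.prod_ne_zero_iff.mpr fun i _ => hv _), mul_one]

lemma fg_id (z : Fin m → Metric.sphere (0 : ℂ) 1) : fm (gm z) = z := by
  funext k
  apply Subtype.ext
  show dv (gm z).val k * ((‖dv (gm z).val k‖)⁻¹ : ℝ) = (z k : ℂ)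
  have hd : dv (gm z).val k = (z k : ℂ) := dv_diag _ (fun i => sphere_ne _) k
  have habs : ‖(z k : ℂ)‖ = 1 := by
    exact mem_sphere_zero_iff_norm.mp (z k).2
  rw [hd, habs]
  simp

end CholTorus
namespace CholTorus

variable {m : ℕ}

lemma Hmem (t : ℝ) (ht0 : 0 ≤ t) (ht1 : t ≤ 1) (p : Xs m) :
    (Hmat t p.val)ᵀ = Hmat t p.val ∧ ∀ k : ℕ, 1 ≤ k → ∀ hk : k ≤ m,
      ((Hmat t p.val).submatrix (Fin.castLE hk) (Fin.castLE hk)).det ≠ 0 :=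
  ⟨Hmat_symm p.2.1, fun k _ hk => Hmat_minor_ne (mem_minors p.2.2) ht0 ht1 k hk⟩

lemma c_Hmat : Continuous fun q : unitInterval × Xs m => Hmat (q.1 : ℝ) q.2.val := by
  have ctv : Continuous fun q : unitInterval × Xs m => (q.1 : ℝ) :=
    continuous_subtype_val.comp continuous_fst
  have cMt : Continuous fun q : unitInterval × Xs m => Mt (q.1 : ℝ) q.2.val := by
    exact ((Complex.continuous_ofReal.comp (continuous_const.sub ctv)).smul
      (c_Mm.comp continuous_snd)).add
      ((Complex.continuous_ofReal.comp ctv).smul continuous_const)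
  have cMtinv : Continuous fun q : unitInterval × Xs m => (Mt (q.1 : ℝ) q.2.val)⁻¹ := by
    have he : (fun q : unitInterval × Xs m => (Mt (q.1 : ℝ) q.2.val)⁻¹)
        = fun q : unitInterval × Xs m => (Mt (q.1 : ℝ) q.2.val).adjugate :=
      funext fun q => by
        rw [Matrix.inv_def, Mt_det (mem_minors q.2.2.2), Ring.inverse_one, one_smul]
    rw [he]
    exact cMt.matrix_adjugate
  have cdd : Continuous fun q : unitInterval × Xs m => dd (q.1 : ℝ) q.2.val := by
    apply continuous_pi
    intro k
    have cdvq : Continuous fun q : unitInterval × Xs m => dv q.2.val k :=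
      (c_dv k).comp continuous_snd
    have cabsinv : Continuous fun q : unitInterval × Xs m =>
        (‖dv q.2.val k‖)⁻¹ :=
      (continuous_norm.comp cdvq).inv₀
        fun q => norm_ne_zero_iff.mpr (dv_ne (mem_minors q.2.2.2) k)
    exact cdvq.mul (Complex.continuous_ofReal.comp
      ((continuous_const.sub ctv).add (ctv.mul cabsinv)))
  exact (cMtinv.matrix_mul cdd.matrix_diagonal).matrix_mul cMtinv.matrix_transpose

/-- the homotopy from the identity to `gC ∘ fC` -/
noncomputable def Hh : ContinuousMap.Homotopy (ContinuousMap.id (Xs m)) (gC.comp fC) where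
  toFun := fun q => ⟨Hmat (q.1 : ℝ) q.2.val, Hmem (q.1 : ℝ) q.1.2.1 q.1.2.2 q.2⟩
  continuous_toFun := c_Hmat.subtype_mk _
  map_zero_left := fun p => by
    apply Subtype.ext
    show Hmat ((0 : unitInterval) : ℝ) p.val = p.val
    have h0 : ((0 : unitInterval) : ℝ) = 0 := rfl
    rw [h0, Hmat_zero (mem_minors p.2.2) p.2.1]
  map_one_left := fun p => by
    apply Subtype.ext
    show Hmat ((1 : unitInterval) : ℝ) p.val = (gC.comp fC p).val
    have h1 : ((1 : unitInterval) : ℝ) = 1 := rfl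
    rw [h1, Hmat_one]
    rfl

end CholTorus

open CholTorus in
/-- The space of complex symmetric `m × m` matrices all of whose leading principal
minors are nonzero is homotopy equivalent to the `m`-torus `(S¹)^m`. -/
theorem symmetric_cholesky_complement_homotopy_torus (m : ℕ) (hm : 1 ≤ m) :
    Nonempty (ContinuousMap.HomotopyEquiv
      {A : Matrix (Fin m) (Fin m) ℂ // Aᵀ = A ∧ ∀ k : ℕ, 1 ≤ k → ∀ hk : k ≤ m,
        (A.submatrix (Fin.castLE hk) (Fin.castLE hk)).det ≠ 0}
      (Fin m → Metric.sphere (0 : ℂ) 1)) := by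
  refine ⟨{ toFun := fC, invFun := gC, left_inv := ⟨Hh.symm⟩, right_inv := ?_ }⟩
  have he : fC.comp gC = ContinuousMap.id (Fin m → Metric.sphere (0 : ℂ) 1) :=
    ContinuousMap.ext fun z => fg_id z
  erw [he]
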